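/- arXiv:2104.09180 — 10 statements merged into one kernel-verified Lean document; each statement's English description precedes it below -/
import Mathlib

section
/- Assume g ≠ 1 (so g generates G). For every n ∈ ℕ and all functions v, v', r, s : Fin n → ZMod p, setting coin_j := g^{v j} · h^{r j} and coin'_j := g^{v' j} · h^{s j}, the identity ∏_j coin'_j = (∏_j coin_j) · h^{∑_j (s j − r j)} holds if and only if ∑_j v' j = ∑_j v j in ZMod p. (The homomorphic zero-sum balance check for Pedersen-committed coins.) -/
section Aux

variable {p : ℕ} [Fact p.Prime] {G : Type*} [CommGroup G] [Fintype G]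

lemma ped_pow_zmod (hG : Fintype.card G = p) (u : G) (m : ℕ) :
    u ^ ((m : ZMod p)).val = u ^ m := by
  haveI : NeZero p := ⟨(Fact.out : p.Prime).ne_zero⟩
  conv_rhs => rw [← Nat.mod_add_div m p, pow_add, pow_mul]
  rw [ZMod.val_natCast, ← hG, pow_card_eq_one, one_pow, mul_one]

lemma ped_orderOf (hG : Fintype.card G = p) (g : G) (hg : g ≠ 1) : orderOf g = p := by
  have hd : orderOf g ∣ p := hG ▸ orderOf_dvd_card
  rcases (Fact.out : p.Prime).eq_one_or_self_of_dvd _ hd with h1 | h1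
  · exact absurd (orderOf_eq_one_iff.mp h1) hg
  · exact h1

end Aux

/-- The homomorphic zero-sum balance check for Pedersen-committed coins. -/
theorem pedersen_zero_sum_check {p : ℕ} [Fact p.Prime] {G : Type*} [CommGroup G]
    [Fintype G] (hG : Fintype.card G = p) (g h : G) (hg : g ≠ 1) :
    ∀ (n : ℕ) (v v' r s : Fin n → ZMod p),
      (∏ j, (g ^ (v' j).val * h ^ (s j).val))
          = (∏ j, (g ^ (v j).val * h ^ (r j).val)) * h ^ (∑ j, (s j - r j)).val
        ↔ (∑ j, v' j) = (∑ j, v j) := by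
  intro n v v' r s
  haveI : NeZero p := ⟨(Fact.out : p.Prime).ne_zero⟩
  have key : ∀ w t : Fin n → ZMod p,
      (∏ j, (g ^ (w j).val * h ^ (t j).val))
        = g ^ (∑ j, w j).val * h ^ (∑ j, t j).val := by
    intro w t
    rw [Finset.prod_mul_distrib, Finset.prod_pow_eq_pow_sum, Finset.prod_pow_eq_pow_sum]
    have hw : ((∑ j, (w j).val : ℕ) : ZMod p) = ∑ j, w j := by
      push_cast [ZMod.natCast_val, ZMod.cast_id]; rfl
    have ht : ((∑ j, (t j).val : ℕ) : ZMod p) = ∑ j, t j := by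
      push_cast [ZMod.natCast_val, ZMod.cast_id]; rfl
    rw [← ped_pow_zmod hG g (∑ j, (w j).val), ← ped_pow_zmod hG h (∑ j, (t j).val), hw, ht]
  rw [key v' s, key v r]
  have hsum : ∑ j, (s j - r j) = (∑ j, s j) - ∑ j, r j := by
    rw [Finset.sum_sub_distrib]
  have hh : h ^ (∑ j, r j).val * h ^ (∑ j, (s j - r j)).val = h ^ (∑ j, s j).val := by
    rw [← pow_add, ← ped_pow_zmod hG h ((∑ j, r j).val + (∑ j, (s j - r j)).val)]
    congr 1
    push_cast [ZMod.natCast_val, ZMod.cast_id, hsum]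
    ring_nf
  rw [mul_assoc, hh, mul_right_cancel_iff]
  constructor
  · intro hgg
    have := pow_eq_pow_iff_modEq.mp hgg
    rw [ped_orderOf hG g hg] at this
    rw [Nat.ModEq, Nat.mod_eq_of_lt (ZMod.val_lt _), Nat.mod_eq_of_lt (ZMod.val_lt _)] at this
    exact ZMod.val_injective p this
  · intro hvv; rw [hvv]
end

section
/- Assume h ≠ 1 (so h generates G). For every fixed a ∈ G, pushing forward the uniform distribution on ZMod p along the map r ↦ a · h^r gives the uniform distribution on G; i.e., PMF.map (fun r => a * h ^ r) (uniform on ZMod p) equals the uniform PMF on G. In particular a Pedersen commitment g^x · h^r with uniformly random r is uniformly distributed on G, independently of the committed value x. (Distributional form of perfect hiding.) -/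
/-- Distributional form of perfect hiding: pushing forward the uniform
distribution on `ZMod p` along `r ↦ a * h ^ r` gives the uniform distribution
on `G`. -/
theorem pedersen_hiding_uniform {p : ℕ} [Fact p.Prime] {G : Type*} [CommGroup G]
    [Fintype G] (hG : Fintype.card G = p) (g h : G) (hh : h ≠ 1) :
    ∀ a : G,
      PMF.map (fun r : ZMod p => a * h ^ r.val) (PMF.uniformOfFintype (ZMod p))
        = PMF.uniformOfFintype G := by
  intro a
  classical
  have hp : p.Prime := Fact.out
  have hord : orderOf h = p := by
    have hdvd : orderOf h ∣ p := hG ▸ orderOf_dvd_card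
    rcases (Nat.Prime.eq_one_or_self_of_dvd hp _ hdvd) with h1 | h1
    · exact absurd (orderOf_eq_one_iff.mp h1) hh
    · exact h1
  have hbij : Function.Bijective (fun r : ZMod p => a * h ^ r.val) := by
    rw [Fintype.bijective_iff_injective_and_card]
    constructor
    · intro r s hrs
      have : h ^ r.val = h ^ s.val := mul_left_cancel hrs
      have hmod : r.val % p = s.val % p := by
        have h2 := pow_inj_mod.mp this
        rwa [hord] at h2
      have : r.val = s.val := by
        rwa [Nat.mod_eq_of_lt (ZMod.val_lt r), Nat.mod_eq_of_lt (ZMod.val_lt s)] at hmod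
      exact ZMod.val_injective p this
    · rw [ZMod.card, hG]
  set f := fun r : ZMod p => a * h ^ r.val with hf
  let e : ZMod p ≃ G := Equiv.ofBijective f hbij
  ext b
  rw [PMF.map_apply, PMF.uniformOfFintype_apply]
  have hbe : b = f (e.symm b) := (e.apply_symm_apply b).symm
  have h1 : ∀ r : ZMod p, r ≠ e.symm b →
      (if b = f r then (PMF.uniformOfFintype (ZMod p)) r else 0) = 0 := by
    intro r hr
    have : b ≠ f r := by
      intro hb
      exact hr (by rw [show f r = e r from rfl] at hb; rw [hb, e.symm_apply_apply])
    simp [this]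
  have h2 : (∑' r : ZMod p, if b = f r then (PMF.uniformOfFintype (ZMod p)) r else 0)
      = (if b = f (e.symm b) then (PMF.uniformOfFintype (ZMod p)) (e.symm b) else 0) :=
    tsum_eq_single _ h1
  rw [h2, if_pos hbe, PMF.uniformOfFintype_apply, ZMod.card, hG]
end

section
/- Assume g ≠ 1 (so g generates G). If x₁, x₂, r₁, r₂ ∈ ZMod p satisfy g^{x₁} · h^{r₁} = g^{x₂} · h^{r₂} and x₁ ≠ x₂, then r₁ ≠ r₂ and h = g^{(x₁ − x₂) · (r₂ − r₁)⁻¹}. (Breaking the binding property of Pedersen commitments yields the discrete logarithm of h in base g.) -/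
private lemma aux_mod {p : ℕ} {G : Type*} [Group G] (u : G) (hu : u ^ p = 1)
    {m n : ℕ} (hmn : m ≡ n [MOD p]) : u ^ m = u ^ n := by
  have hd : orderOf u ∣ p := orderOf_dvd_of_pow_eq_one hu
  exact pow_eq_pow_iff_modEq.mpr (hmn.of_dvd hd)

private lemma aux_add {p : ℕ} [NeZero p] {G : Type*} [Group G] (u : G) (hu : u ^ p = 1)
    (a b : ZMod p) : u ^ (a + b).val = u ^ a.val * u ^ b.val := by
  rw [← pow_add]
  refine aux_mod u hu ?_
  rw [ZMod.val_add]
  exact (Nat.mod_modEq _ _)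

private lemma aux_mul {p : ℕ} [NeZero p] {G : Type*} [Group G] (u : G) (hu : u ^ p = 1)
    (a b : ZMod p) : u ^ (a * b).val = (u ^ a.val) ^ b.val := by
  rw [← pow_mul]
  refine aux_mod u hu ?_
  rw [ZMod.val_mul]
  exact (Nat.mod_modEq _ _)

/-- Breaking the binding property of Pedersen commitments yields the discrete
logarithm of `h` in base `g`. -/
theorem pedersen_binding_dlog {p : ℕ} [Fact p.Prime] {G : Type*} [CommGroup G]
    [Fintype G] (hG : Fintype.card G = p) (g h : G) (hg : g ≠ 1)
    (x₁ x₂ r₁ r₂ : ZMod p)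
    (heq : g ^ x₁.val * h ^ r₁.val = g ^ x₂.val * h ^ r₂.val)
    (hx : x₁ ≠ x₂) :
    r₁ ≠ r₂ ∧ h = g ^ ((x₁ - x₂) * (r₂ - r₁)⁻¹).val := by
  have hp : p.Prime := Fact.out
  have hcard : ∀ u : G, u ^ p = 1 := by
    intro u; rw [← hG]; exact pow_card_eq_one
  have hordg : orderOf g = p := by
    have hd : orderOf g ∣ p := orderOf_dvd_of_pow_eq_one (hcard g)
    rcases (Nat.Prime.eq_one_or_self_of_dvd hp _ hd) with h1 | h1
    · exact absurd (orderOf_eq_one_iff.mp h1) hg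
    · exact h1
  -- key equation: g ^ (x₁ - x₂).val = h ^ (r₂ - r₁).val
  have hkey : g ^ (x₁ - x₂).val = h ^ (r₂ - r₁).val := by
    have h1 : g ^ (x₁ - x₂).val * h ^ (r₁ - r₁).val
        = g ^ (x₂ - x₂).val * h ^ (r₂ - r₁).val := by
      have e1 : ∀ a b : ZMod p, a - b = a + (-b) := by intro a b; ring
      rw [e1 x₁ x₂, e1 r₁ r₁, e1 x₂ x₂, e1 r₂ r₁,
        aux_add g (hcard g), aux_add h (hcard h), aux_add g (hcard g),
        aux_add h (hcard h)]
      rw [mul_mul_mul_comm, mul_mul_mul_comm (g ^ x₂.val)]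
      rw [heq]
    simpa [sub_self, ZMod.val_zero] using h1
  have hr : r₁ ≠ r₂ := by
    intro hr
    subst hr
    have : g ^ (x₁ - x₂).val = 1 := by simpa [sub_self, ZMod.val_zero] using hkey
    have hdvd : orderOf g ∣ (x₁ - x₂).val := orderOf_dvd_of_pow_eq_one this
    rw [hordg] at hdvd
    have hlt : (x₁ - x₂).val < p := ZMod.val_lt _
    have hz : (x₁ - x₂).val = 0 := Nat.eq_zero_of_dvd_of_lt hdvd hlt
    have : x₁ - x₂ = 0 := by
      have := (ZMod.val_eq_zero _).mp hz
      exact this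
    exact hx (sub_eq_zero.mp this)
  refine ⟨hr, ?_⟩
  have hne : r₂ - r₁ ≠ 0 := sub_ne_zero.mpr (Ne.symm hr)
  have hcancel : (r₂ - r₁) * (r₂ - r₁)⁻¹ = 1 := mul_inv_cancel₀ hne
  calc h = h ^ (1 : ZMod p).val := by rw [ZMod.val_one]; simp
    _ = h ^ ((r₂ - r₁) * (r₂ - r₁)⁻¹).val := by rw [hcancel]
    _ = (h ^ (r₂ - r₁).val) ^ ((r₂ - r₁)⁻¹).val := aux_mul h (hcard h) _ _
    _ = (g ^ (x₁ - x₂).val) ^ ((r₂ - r₁)⁻¹).val := by rw [hkey]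
    _ = g ^ ((x₁ - x₂) * (r₂ - r₁)⁻¹).val := (aux_mul g (hcard g) _ _).symm
end

section
/- Let a, c ∈ G and z₁, z₂, e₁, e₂ ∈ ZMod p with e₁ ≠ e₂. If h^{z₁} = a · c^{e₁} and h^{z₂} = a · c^{e₂}, then c = h^{(z₁ − z₂) · (e₁ − e₂)⁻¹}. (Special soundness of the Schnorr sigma protocol: two accepting transcripts with the same commitment and distinct challenges determine a discrete logarithm of c in base h.) -/
private lemma schnorr_pow_mod_card {p : ℕ} {G : Type*} [CommGroup G] [Fintype G]
    (hG : Fintype.card G = p) (u : G) (n : ℕ) : u ^ (n % p) = u ^ n := by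
  conv_rhs => rw [← Nat.div_add_mod n p]
  rw [pow_add, pow_mul, ← hG, pow_card_eq_one, one_pow, one_mul]

private lemma pow_val_add {p : ℕ} [NeZero p] {G : Type*} [CommGroup G] [Fintype G]
    (hG : Fintype.card G = p) (u : G) (x y : ZMod p) :
    u ^ (x + y).val = u ^ x.val * u ^ y.val := by
  rw [ZMod.val_add, schnorr_pow_mod_card hG, pow_add]

private lemma pow_val_mul {p : ℕ} [NeZero p] {G : Type*} [CommGroup G] [Fintype G]
    (hG : Fintype.card G = p) (u : G) (x y : ZMod p) :
    u ^ (x * y).val = (u ^ x.val) ^ y.val := by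
  rw [ZMod.val_mul, schnorr_pow_mod_card hG, pow_mul]

/-- Special soundness of the Schnorr sigma protocol: two accepting transcripts
with the same commitment and distinct challenges determine a discrete
logarithm of `c` in base `h`. -/
theorem schnorr_special_soundness {p : ℕ} [Fact p.Prime] {G : Type*} [CommGroup G]
    [Fintype G] (hG : Fintype.card G = p) (h : G)
    (a c : G) (z₁ z₂ e₁ e₂ : ZMod p) (he : e₁ ≠ e₂)
    (h₁ : h ^ z₁.val = a * c ^ e₁.val)
    (h₂ : h ^ z₂.val = a * c ^ e₂.val) :
    c = h ^ ((z₁ - z₂) * (e₁ - e₂)⁻¹).val := by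
  have hd : e₁ - e₂ ≠ 0 := sub_ne_zero.mpr he
  have key : h ^ (z₁ - z₂).val = c ^ (e₁ - e₂).val := by
    have hz : h ^ z₂.val * h ^ (z₁ - z₂).val = h ^ z₁.val := by
      rw [← pow_val_add hG, add_sub_cancel]
    have hc : c ^ e₂.val * c ^ (e₁ - e₂).val = c ^ e₁.val := by
      rw [← pow_val_add hG, add_sub_cancel]
    have : a * c ^ e₂.val * h ^ (z₁ - z₂).val = a * (c ^ e₂.val * c ^ (e₁ - e₂).val) := by
      rw [← h₂, hz, h₁, hc]
    rw [mul_assoc] at this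
    exact mul_left_cancel (mul_left_cancel this)
  have hone : ((e₁ - e₂) * (e₁ - e₂)⁻¹).val = 1 := by
    rw [ZMod.mul_inv_of_unit _ (Ne.isUnit hd), ZMod.val_one]
  calc c = c ^ ((e₁ - e₂) * (e₁ - e₂)⁻¹).val := by rw [hone, pow_one]
    _ = (c ^ (e₁ - e₂).val) ^ (e₁ - e₂)⁻¹.val := pow_val_mul hG c _ _
    _ = (h ^ (z₁ - z₂).val) ^ (e₁ - e₂)⁻¹.val := by rw [key]
    _ = h ^ ((z₁ - z₂) * (e₁ - e₂)⁻¹).val := (pow_val_mul hG h _ _).symm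
end

section
/- Let w, e ∈ ZMod p and c := h^w. The distribution of honestly generated accepting Schnorr transcripts with challenge e equals the simulated distribution: PMF.map (fun k => (h^k, k + e·w)) (uniform on ZMod p) = PMF.map (fun z => (h^z · c^{-e}, z)) (uniform on ZMod p), where each pair records (commitment, response). (Perfect honest-verifier zero knowledge of the Schnorr protocol: the simulator that picks z uniformly and sets a := h^z · c^{-e} produces transcripts identically distributed to real ones.) -/
lemma map_equiv_uniform {α : Type*} [Fintype α] [DecidableEq α] [Nonempty α] (σ : Equiv α α) :
    PMF.map σ (PMF.uniformOfFintype α) = PMF.uniformOfFintype α := by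
  ext b
  simp only [PMF.map_apply, PMF.uniformOfFintype_apply]
  rw [tsum_eq_single (σ.symm b)]
  · simp
  · intro a ha
    rw [if_neg]
    intro hb
    exact ha (by simp [hb])

lemma pow_val_hom {p : ℕ} [Fact p.Prime] {G : Type*} [CommGroup G]
    [Fintype G] (hG : Fintype.card G = p) (h : G) (a b : ZMod p) :
    h ^ (a + b).val = h ^ a.val * h ^ b.val := by
  have hp : h ^ p = 1 := by rw [← hG]; exact pow_card_eq_one
  have hmod : ∀ n : ℕ, h ^ (n % p) = h ^ n := by
    intro n
    conv_rhs => rw [← Nat.div_add_mod n p]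
    rw [pow_add, pow_mul, hp, one_pow, one_mul]
  rw [ZMod.val_add, hmod, pow_add]

/-- Perfect honest-verifier zero knowledge of the Schnorr protocol: real
transcripts `(h^k, k + e·w)` for uniform `k` are distributed identically to
simulated transcripts `(h^z · c^{-e}, z)` for uniform `z`. -/
theorem schnorr_hvzk {p : ℕ} [Fact p.Prime] {G : Type*} [CommGroup G]
    [Fintype G] (hG : Fintype.card G = p) (h : G)
    (w e : ZMod p) (c : G) (hc : c = h ^ w.val) :
    PMF.map (fun k : ZMod p => ((h ^ k.val, k + e * w) : G × ZMod p))
        (PMF.uniformOfFintype (ZMod p))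
      = PMF.map (fun z : ZMod p => ((h ^ z.val * (c ^ e.val)⁻¹, z) : G × ZMod p))
        (PMF.uniformOfFintype (ZMod p)) := by
  have hp : h ^ p = 1 := by rw [← hG]; exact pow_card_eq_one
  have hmod : ∀ n : ℕ, h ^ (n % p) = h ^ n := by
    intro n
    conv_rhs => rw [← Nat.div_add_mod n p]
    rw [pow_add, pow_mul, hp, one_pow, one_mul]
  have hce : c ^ e.val = h ^ (e * w).val := by
    rw [hc, ← pow_mul, ZMod.val_mul, hmod, Nat.mul_comm]
  set σ : Equiv (ZMod p) (ZMod p) := Equiv.addRight (e * w) with hσ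
  calc PMF.map (fun k : ZMod p => ((h ^ k.val, k + e * w) : G × ZMod p))
        (PMF.uniformOfFintype (ZMod p))
      = PMF.map ((fun z : ZMod p => ((h ^ z.val * (c ^ e.val)⁻¹, z) : G × ZMod p)) ∘ σ)
        (PMF.uniformOfFintype (ZMod p)) := by
        congr 1
        funext k
        simp only [Function.comp_apply, hσ, Equiv.coe_addRight]
        rw [hce, pow_val_hom hG h k (e * w)]
        simp [mul_assoc]
    _ = PMF.map (fun z : ZMod p => ((h ^ z.val * (c ^ e.val)⁻¹, z) : G × ZMod p))
        (PMF.map σ (PMF.uniformOfFintype (ZMod p))) := by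
        rw [PMF.map_comp]
    _ = _ := by rw [map_equiv_uniform]
end

section
/- Let n, ℓ ∈ ℕ. Let v : Fin n → ZMod p be input values, r : Fin n → ZMod p input randomness, b : Fin n → Fin ℓ → ℕ output bits with b j k ≤ 1 for all j, k, and s : Fin n → Fin ℓ → ZMod p bit-commitment randomness. Define input coins coin_j := g^{v j} · h^{r j}, output coins coin'_j := ∏_k (g^{b j k} · h^{s j k})^{2^k}, and t := ∑_j (∑_k (2^k : ZMod p) · s j k − r j). If ∑_j v j = ∑_j ((∑_k b j k · 2^k : ℕ) : ZMod p) in ZMod p, then ∏_j coin'_j = (∏_j coin_j) · h^t. (Correctness of the PSC finalization check: for an honest execution satisfying the zero-sum constraint, the combined randomness t is a discrete logarithm in base h of the coin quotient, so the Schnorr proof computed in the MPC program verifies.) -/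
private lemma pow_congr_zmod {p : ℕ} [Fact p.Prime] {G : Type*} [CommGroup G]
    [Fintype G] (hG : Fintype.card G = p) (u : G) {a b : ℕ}
    (hab : (a : ZMod p) = (b : ZMod p)) : u ^ a = u ^ b := by
  rw [pow_eq_pow_iff_modEq]
  exact ((ZMod.natCast_eq_natCast_iff _ _ _).mp hab).of_dvd (hG ▸ orderOf_dvd_card)

/-- Correctness of the PSC finalization check: for an honest execution
satisfying the zero-sum constraint, the combined randomness `t` is a discrete
logarithm in base `h` of the coin quotient. -/
theorem psc_finalization_correct {p : ℕ} [Fact p.Prime] {G : Type*} [CommGroup G]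
    [Fintype G] (hG : Fintype.card G = p) (g h : G)
    (n ℓ : ℕ) (v : Fin n → ZMod p) (r : Fin n → ZMod p)
    (b : Fin n → Fin ℓ → ℕ) (hb : ∀ j k, b j k ≤ 1)
    (s : Fin n → Fin ℓ → ZMod p)
    (coin : Fin n → G) (hcoin : ∀ j, coin j = g ^ (v j).val * h ^ (r j).val)
    (coin' : Fin n → G)
    (hcoin' : ∀ j, coin' j = ∏ k : Fin ℓ, (g ^ (b j k) * h ^ (s j k).val) ^ (2 ^ (k : ℕ)))
    (t : ZMod p)
    (ht : t = ∑ j, ((∑ k : Fin ℓ, (2 ^ (k : ℕ) : ZMod p) * s j k) - r j))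
    (hsum : (∑ j, v j)
      = ∑ j, (((∑ k : Fin ℓ, b j k * 2 ^ (k : ℕ) : ℕ) : ZMod p))) :
    (∏ j, coin' j) = (∏ j, coin j) * h ^ t.val := by
  simp only [hcoin', hcoin, mul_pow, Finset.prod_mul_distrib, ← pow_mul,
    Finset.prod_pow_eq_pow_sum]
  rw [mul_assoc, ← pow_add]
  have hg : g ^ (∑ j, ∑ k : Fin ℓ, b j k * 2 ^ (k : ℕ))
      = g ^ (∑ j, (v j).val) := by
    apply pow_congr_zmod hG
    rw [Nat.cast_sum, ← hsum]
    push_cast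
    simp [ZMod.natCast_val, ZMod.cast_id]
  have hh : h ^ (∑ j, ∑ k : Fin ℓ, (s j k).val * 2 ^ (k : ℕ))
      = h ^ (∑ j, (r j).val + t.val) := by
    apply pow_congr_zmod hG
    push_cast [ZMod.natCast_val, ZMod.cast_id, ht]
    rw [Finset.sum_sub_distrib, add_sub_cancel]
    exact Finset.sum_congr rfl fun j _ => Finset.sum_congr rfl fun k _ => mul_comm _ _
  rw [hg, hh]
end

section
/- Assume g ≠ 1 (so g generates G) and let α ∈ ZMod p with h = g^α. Let n ∈ ℕ, v, v', r, s : Fin n → ZMod p, and t ∈ ZMod p. Set coin_j := g^{v j} · h^{r j} and coin'_j := g^{v' j} · h^{s j}, and suppose ∏_j coin'_j = (∏_j coin_j) · h^t. Then setting Δ := ∑_j v' j − ∑_j v j and S := ∑_j (s j − r j), we have Δ = α · (t − S); consequently, if Δ ≠ 0 then t − S ≠ 0 and α = Δ · (t − S)⁻¹. (Soundness core: any accepted finalization either satisfies the mod-p zero-sum constraint or reveals the discrete logarithm of h in base g.) -/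
/-- Soundness core: any accepted finalization either satisfies the mod-p
zero-sum constraint or reveals the discrete logarithm of `h` in base `g`. -/
theorem psc_soundness_core {p : ℕ} [Fact p.Prime] {G : Type*} [CommGroup G]
    [Fintype G] (hG : Fintype.card G = p) (g h : G) (hg : g ≠ 1)
    (α : ZMod p) (hα : h = g ^ α.val)
    (n : ℕ) (v v' r s : Fin n → ZMod p) (t : ZMod p)
    (coin : Fin n → G) (hcoin : ∀ j, coin j = g ^ (v j).val * h ^ (r j).val)
    (coin' : Fin n → G) (hcoin' : ∀ j, coin' j = g ^ (v' j).val * h ^ (s j).val)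
    (hfin : (∏ j, coin' j) = (∏ j, coin j) * h ^ t.val)
    (Δ : ZMod p) (hΔ : Δ = (∑ j, v' j) - (∑ j, v j))
    (S : ZMod p) (hS : S = ∑ j, (s j - r j)) :
    Δ = α * (t - S) ∧ (Δ ≠ 0 → t - S ≠ 0 ∧ α = Δ * (t - S)⁻¹) := by
  have hp : p.Prime := Fact.out
  haveI : NeZero p := ⟨hp.ne_zero⟩
  have hord : orderOf g = p := by
    have h1 : g ^ p = 1 := by rw [← hG]; exact pow_card_eq_one
    exact orderOf_eq_prime h1 hg
  have hpow : ∀ k : ℕ, g ^ (k % p) = g ^ k := by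
    intro k
    conv_rhs => rw [← Nat.mod_add_div k p]
    rw [pow_add, pow_mul, ← hG, pow_card_eq_one, one_pow, mul_one]
  set e : ZMod p → G := fun a => g ^ a.val with he
  have e_zero : e 0 = 1 := by simp [he]
  have e_add : ∀ a b : ZMod p, e (a + b) = e a * e b := by
    intro a b
    simp only [he]
    rw [ZMod.val_add, hpow, pow_add]
  have e_mul : ∀ a b : ZMod p, e (a * b) = (e a) ^ b.val := by
    intro a b
    simp only [he]
    rw [ZMod.val_mul, hpow, pow_mul]
  have e_inj : Function.Injective e := by
    intro a b hab
    have hmod : a.val ≡ b.val [MOD p] := by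
      have := (pow_eq_pow_iff_modEq).mp hab
      rwa [hord] at this
    have hval : a.val = b.val :=
      Nat.ModEq.eq_of_lt_of_lt hmod (ZMod.val_lt a) (ZMod.val_lt b)
    exact ZMod.val_injective p hval
  have e_sum : ∀ (f : Fin n → ZMod p), e (∑ j, f j) = ∏ j, e (f j) := by
    intro f
    classical
    induction (Finset.univ : Finset (Fin n)) using Finset.induction with
    | empty => simp [e_zero]
    | insert _ _ hnot ih =>
        rw [Finset.sum_insert hnot, Finset.prod_insert hnot, e_add, ih]
  have hh : h = e α := hα
  have hc' : ∀ j, e (v' j + α * s j) = coin' j := by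
    intro j
    rw [hcoin' j, e_add, e_mul, hh]
  have hc : ∀ j, e (v j + α * r j) = coin j := by
    intro j
    rw [hcoin j, e_add, e_mul, hh]
  have key : (∑ j, (v' j + α * s j)) = (∑ j, (v j + α * r j)) + α * t := by
    apply e_inj
    rw [e_add, e_sum, e_sum, e_mul, ← hh]
    rw [Finset.prod_congr rfl fun j _ => hc' j,
      Finset.prod_congr rfl fun j _ => hc j]
    exact hfin
  rw [Finset.sum_add_distrib, Finset.sum_add_distrib, ← Finset.mul_sum,
    ← Finset.mul_sum] at key
  have h1 : Δ = α * (t - S) := by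
    rw [hΔ, hS, Finset.sum_sub_distrib]
    linear_combination key
  refine ⟨h1, fun hne => ?_⟩
  have hts : t - S ≠ 0 := by
    intro h0
    exact hne (by rw [h1, h0, mul_zero])
  refine ⟨hts, ?_⟩
  rw [h1]
  field_simp
end

section
/- Assume g ≠ 1 and let α ∈ ZMod p with h = g^α. Let n, ℓ ∈ ℕ with n · 2^ℓ ≤ p. Let v : Fin n → ℕ with v j < 2^ℓ for all j, r : Fin n → ZMod p, bits b : Fin n → Fin ℓ → ℕ with b j k ≤ 1, s : Fin n → Fin ℓ → ZMod p, and t ∈ ZMod p. Set coin_j := g^{v j} · h^{r j}, coin'_j := ∏_k (g^{b j k} · h^{s j k})^{2^k}, and suppose ∏_j coin'_j = (∏_j coin_j) · h^t. Then either ∑_j ∑_k b j k · 2^k = ∑_j v j as natural numbers, or, with Δ := ((∑_j ∑_k b j k · 2^k : ℕ) − (∑_j v j : ℕ) : ZMod p) (computed by casting each sum to ZMod p and subtracting) and S := ∑_j (∑_k (2^k : ZMod p) · s j k − r j), we have Δ ≠ 0, t − S ≠ 0, and α = Δ · (t − S)⁻¹. (The bit-decomposition range proof combined with the Schnorr balance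 proof ensures the integer zero-sum constraint, unless the discrete logarithm of h in base g can be computed.) -/
/-- The bit-decomposition range proof combined with the Schnorr balance proof
ensures the integer zero-sum constraint, unless the discrete logarithm of `h`
in base `g` can be computed. -/
theorem psc_range_soundness {p : ℕ} [Fact p.Prime] {G : Type*} [CommGroup G]
    [Fintype G] (hG : Fintype.card G = p) (g h : G) (hg : g ≠ 1)
    (α : ZMod p) (hα : h = g ^ α.val)
    (n ℓ : ℕ) (hnl : n * 2 ^ ℓ ≤ p)
    (v : Fin n → ℕ) (hv : ∀ j, v j < 2 ^ ℓ)
    (r : Fin n → ZMod p)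
    (b : Fin n → Fin ℓ → ℕ) (hb : ∀ j k, b j k ≤ 1)
    (s : Fin n → Fin ℓ → ZMod p) (t : ZMod p)
    (coin : Fin n → G)
    (hcoin : ∀ j, coin j = g ^ (((v j : ℕ) : ZMod p)).val * h ^ (r j).val)
    (coin' : Fin n → G)
    (hcoin' : ∀ j, coin' j = ∏ k : Fin ℓ, (g ^ (b j k) * h ^ (s j k).val) ^ (2 ^ (k : ℕ)))
    (hfin : (∏ j, coin' j) = (∏ j, coin j) * h ^ t.val)
    (Δ : ZMod p)
    (hΔ : Δ = ((∑ j, ∑ k : Fin ℓ, b j k * 2 ^ (k : ℕ) : ℕ) : ZMod p)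
                - ((∑ j, v j : ℕ) : ZMod p))
    (S : ZMod p)
    (hS : S = ∑ j, ((∑ k : Fin ℓ, (2 ^ (k : ℕ) : ZMod p) * s j k) - r j)) :
    (∑ j, ∑ k : Fin ℓ, b j k * 2 ^ (k : ℕ)) = (∑ j, v j)
      ∨ (Δ ≠ 0 ∧ t - S ≠ 0 ∧ α = Δ * (t - S)⁻¹) := by
  have hp : p.Prime := Fact.out
  -- order of g is p
  have ho : orderOf g = p := by
    have hd : orderOf g ∣ p := hG ▸ orderOf_dvd_card
    rcases (Nat.Prime.eq_one_or_self_of_dvd hp _ hd) with h1 | h1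
    · exact absurd (orderOf_eq_one_iff.mp h1) hg
    · exact h1
  have gpow_eq : ∀ x y : ℕ, g ^ x = g ^ y ↔ (x : ZMod p) = (y : ZMod p) := by
    intro x y
    rw [pow_eq_pow_iff_modEq, ho, Nat.ModEq, ZMod.natCast_eq_natCast_iff']

  -- rewrite products as powers of g
  have h1 : ∏ j, coin' j
      = g ^ (∑ j, ∑ k : Fin ℓ, (b j k + α.val * (s j k).val) * 2 ^ (k : ℕ)) := by
    simp only [hcoin', hα, ← pow_mul, ← pow_add, Finset.prod_pow_eq_pow_sum]
  have h2 : (∏ j, coin j) * h ^ t.val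
      = g ^ ((∑ j, ((((v j : ℕ) : ZMod p)).val + α.val * (r j).val)) + α.val * t.val) := by
    simp only [hcoin, hα, ← pow_mul, ← pow_add, Finset.prod_pow_eq_pow_sum]
  rw [h1, h2] at hfin
  have hz0 := (gpow_eq _ _).mp hfin
  push_cast [ZMod.natCast_val, ZMod.cast_id] at hz0
  -- massage hz0 into atomic-sum form
  simp only [add_mul, Finset.sum_add_distrib, mul_assoc, ← Finset.mul_sum] at hz0
  have hcomm : ∑ j, ∑ k : Fin ℓ, s j k * (2 ^ (k : ℕ) : ZMod p)
      = ∑ j, ∑ k : Fin ℓ, (2 ^ (k : ℕ) : ZMod p) * s j k :=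
    Finset.sum_congr rfl fun j _ => Finset.sum_congr rfl fun k _ => mul_comm _ _
  have key : Δ = α * (t - S) := by
    rw [hΔ, hS]
    push_cast
    rw [Finset.sum_sub_distrib]
    linear_combination hz0 - α * hcomm
  by_cases heq : (∑ j, ∑ k : Fin ℓ, b j k * 2 ^ (k : ℕ)) = (∑ j, v j)
  · exact Or.inl heq
  right
  have hn : 0 < n := by
    rcases Nat.eq_zero_or_pos n with h0 | h0
    · subst h0; simp at heq
    · exact h0
  have hpow : 0 < 2 ^ ℓ := Nat.two_pow_pos _
  have hbound : ∀ w : Fin n → ℕ, (∀ j, w j < 2 ^ ℓ) → (∑ j, w j) < p := by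
    intro w hw
    calc (∑ j, w j) ≤ ∑ _j : Fin n, (2 ^ ℓ - 1) :=
          Finset.sum_le_sum fun j _ => Nat.le_pred_of_lt (hw j)
      _ = n * (2 ^ ℓ - 1) := by simp [Finset.sum_const, mul_comm]
      _ < p := by
          have e : n * (2 ^ ℓ - 1) = n * 2 ^ ℓ - n := by rw [Nat.mul_sub, mul_one]
          have hle : n ≤ n * 2 ^ ℓ := Nat.le_mul_of_pos_right n hpow
          omega
  have hsum2 : ∀ m : ℕ, (∑ i ∈ Finset.range m, 2 ^ i) < 2 ^ m := by
    intro m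
    induction m with
    | zero => simp
    | succ m ih => rw [Finset.sum_range_succ, pow_succ]; omega
  have hBlt : (∑ j, ∑ k : Fin ℓ, b j k * 2 ^ (k : ℕ)) < p := by
    refine hbound _ fun j => ?_
    calc (∑ k : Fin ℓ, b j k * 2 ^ (k : ℕ)) ≤ ∑ k : Fin ℓ, 2 ^ (k : ℕ) :=
          Finset.sum_le_sum fun k _ => by
            have := hb j k; nlinarith [Nat.two_pow_pos (k : ℕ)]
      _ = ∑ i ∈ Finset.range ℓ, 2 ^ i := Fin.sum_univ_eq_sum_range _ _
      _ < 2 ^ ℓ := hsum2 ℓ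
  have hVlt : (∑ j, v j) < p := hbound _ hv
  have hΔne : Δ ≠ 0 := by
    rw [hΔ, sub_ne_zero]
    intro hc
    rw [ZMod.natCast_eq_natCast_iff, Nat.ModEq,
      Nat.mod_eq_of_lt hBlt, Nat.mod_eq_of_lt hVlt] at hc
    exact heq hc
  have htne : t - S ≠ 0 := by
    intro h0
    rw [h0, mul_zero] at key
    exact hΔne key
  exact ⟨hΔne, htne, by rw [key, mul_assoc, mul_inv_cancel₀ htne, mul_one]⟩
end

section
/- Let c, c_a ∈ G and x₁, x₂, f₁, f₂, za₁, za₂ ∈ ZMod p with x₁ ≠ x₂. If c^{x₁} · c_a = g^{f₁} · h^{za₁} and c^{x₂} · c_a = g^{f₂} · h^{za₂}, then c = g^{(f₁ − f₂)·(x₁ − x₂)⁻¹} · h^{(za₁ − za₂)·(x₁ − x₂)⁻¹}. (First extraction step in the special soundness of the sigma protocol proving that a Pedersen commitment commits to 0 or 1: two accepting transcripts with distinct challenges produce an explicit opening of c.) -/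
private lemma pow_congr_mod {p : ℕ} [Fact p.Prime] {G : Type*} [CommGroup G]
    [Fintype G] (hG : Fintype.card G = p) (u : G) {m n : ℕ}
    (hmn : (m : ZMod p) = (n : ZMod p)) : u ^ m = u ^ n := by
  have hord : orderOf u ∣ p := hG ▸ orderOf_dvd_card
  have hmod : m ≡ n [MOD p] := (ZMod.natCast_eq_natCast_iff _ _ _).mp hmn
  have : m % orderOf u = n % orderOf u := hmod.of_dvd hord
  rw [← pow_mod_orderOf, this, pow_mod_orderOf]

private lemma pow_zmod_val_mul {p : ℕ} [Fact p.Prime] {G : Type*} [CommGroup G]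
    [Fintype G] (hG : Fintype.card G = p) (u : G) (a b : ZMod p) :
    (u ^ a.val) ^ b.val = u ^ (a * b).val := by
  rw [← pow_mul]
  exact pow_congr_mod hG u (by push_cast [ZMod.natCast_val, ZMod.cast_id]; ring)

/-- First extraction step in the special soundness of the sigma protocol
proving that a Pedersen commitment commits to 0 or 1: two accepting
transcripts with distinct challenges produce an explicit opening of `c`. -/
theorem bit_sigma_extract_opening {p : ℕ} [Fact p.Prime] {G : Type*} [CommGroup G]
    [Fintype G] (hG : Fintype.card G = p) (g h : G)
    (c ca : G) (x₁ x₂ f₁ f₂ za₁ za₂ : ZMod p) (hx : x₁ ≠ x₂)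
    (h₁ : c ^ x₁.val * ca = g ^ f₁.val * h ^ za₁.val)
    (h₂ : c ^ x₂.val * ca = g ^ f₂.val * h ^ za₂.val) :
    c = g ^ (((f₁ - f₂) * (x₁ - x₂)⁻¹)).val * h ^ (((za₁ - za₂) * (x₁ - x₂)⁻¹)).val := by
  have key : ∀ (u : G) (a b : ZMod p), u ^ a.val * u ^ b.val = u ^ (a + b).val := by
    intro u a b
    rw [← pow_add]
    exact pow_congr_mod hG u (by push_cast [ZMod.natCast_val, ZMod.cast_id]; ring)
  have hd : c ^ (x₁ - x₂).val = g ^ (f₁ - f₂).val * h ^ (za₁ - za₂).val := by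
    have : (c ^ (x₁ - x₂).val) * (c ^ x₂.val * ca)
        = (g ^ (f₁ - f₂).val * h ^ (za₁ - za₂).val) * (c ^ x₂.val * ca) := by
      rw [← mul_assoc, key c (x₁ - x₂) x₂, sub_add_cancel, h₁, h₂,
        mul_mul_mul_comm, key g (f₁ - f₂) f₂, key h (za₁ - za₂) za₂,
        sub_add_cancel, sub_add_cancel]
    exact mul_right_cancel this
  have hne : x₁ - x₂ ≠ 0 := sub_ne_zero.mpr hx
  have hinv : (x₁ - x₂) * (x₁ - x₂)⁻¹ = 1 := mul_inv_cancel₀ hne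
  calc c = c ^ (1 : ZMod p).val := by
        rw [ZMod.val_one, pow_one]
    _ = (c ^ (x₁ - x₂).val) ^ ((x₁ - x₂)⁻¹).val := by
        rw [pow_zmod_val_mul hG, hinv]
    _ = (g ^ (f₁ - f₂).val) ^ ((x₁ - x₂)⁻¹).val * (h ^ (za₁ - za₂).val) ^ ((x₁ - x₂)⁻¹).val := by
        rw [hd, mul_pow]
    _ = _ := by rw [pow_zmod_val_mul hG, pow_zmod_val_mul hG]
end

section
/- Assume g ≠ 1 (so g generates G). Let b ∈ {0, 1} ⊆ ℕ and s₀, s₁ ∈ ZMod p, and set c⁽⁰⁾ := g^b · h^{s₀} and c⁽¹⁾ := g^{1−b} · h^{s₁} (the pair of candidate bit commitments, one committing to b and one to 1−b). If c⁽⁰⁾ = c⁽¹⁾ then s₀ ≠ s₁ and h = g^{(2·(b : ZMod p) − 1)·(s₁ − s₀)⁻¹}. In particular, if the discrete logarithm of h in base g is unknown, the two candidate commitments for each bit position are distinct, so a party comparing the selected commitment c^{(k)} against its stored candidates recovers the committed bit unambiguously. (Well-definedness of output-value recovery in finalization.) -/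
/-- Well-definedness of output-value recovery in finalization: the two
candidate bit commitments (one to `b`, one to `1 - b`) coincide only if the
discrete logarithm of `h` in base `g` is revealed. -/
theorem bit_candidates_distinct {p : ℕ} [Fact p.Prime] {G : Type*} [CommGroup G]
    [Fintype G] (hG : Fintype.card G = p) (g h : G) (hg : g ≠ 1)
    (b : ℕ) (hb : b ∈ ({0, 1} : Set ℕ)) (s₀ s₁ : ZMod p)
    (c0 c1 : G) (hc0 : c0 = g ^ b * h ^ s₀.val)
    (hc1 : c1 = g ^ (1 - b) * h ^ s₁.val)
    (heq : c0 = c1) :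
    s₀ ≠ s₁ ∧ h = g ^ ((2 * (b : ZMod p) - 1) * (s₁ - s₀)⁻¹).val := by
  have hp : p.Prime := Fact.out
  have hp1 : 1 < p := hp.one_lt
  subst hc0 hc1
  -- every element has u^p = 1
  have hord : ∀ u : G, u ^ p = 1 := by
    intro u; rw [← hG]; exact pow_card_eq_one
  have hmod : ∀ (u : G) (m : ℕ), u ^ m = u ^ (m % p) := by
    intro u m
    conv_lhs => rw [← Nat.div_add_mod m p]
    rw [pow_add, pow_mul, hord, one_pow, one_mul]
  have hval : ∀ (u : G) (a b : ZMod p), u ^ (a + b).val = u ^ a.val * u ^ b.val := by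
    intro u a b
    rw [← pow_add, hmod u (a.val + b.val), ZMod.val_add]
  have hvalmul : ∀ (u : G) (a b : ZMod p), u ^ (a * b).val = (u ^ a.val) ^ b.val := by
    intro u a b
    rw [← pow_mul, hmod u (a.val * b.val), ZMod.val_mul]
  -- orderOf g = p
  have hordg : orderOf g = p := by
    rcases (hp.eq_one_or_self_of_dvd _ (hG ▸ orderOf_dvd_card)) with h1 | h1
    · exact absurd (orderOf_eq_one_iff.mp h1) hg
    · exact h1
  have hginj : ∀ a b : ZMod p, g ^ a.val = g ^ b.val → a = b := by
    intro a b hab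
    have := pow_eq_pow_iff_modEq.mp hab
    rw [hordg, Nat.ModEq, Nat.mod_eq_of_lt a.val_lt, Nat.mod_eq_of_lt b.val_lt] at this
    exact ZMod.val_injective p this
  have hsurj : Function.Surjective (fun a : ZMod p => g ^ a.val) := by
    have : Function.Bijective (fun a : ZMod p => g ^ a.val) := by
      rw [Fintype.bijective_iff_injective_and_card]
      exact ⟨fun a b hab => hginj a b hab, by rw [ZMod.card, hG]⟩
    exact this.2
  obtain ⟨x, hx0⟩ := hsurj h
  have hx : g ^ x.val = h := hx0
  have hone : (1 : ZMod p).val = 1 := ZMod.val_one p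
  have hzero : (0 : ZMod p).val = 0 := ZMod.val_zero
  rcases hb with rfl | rfl
  · -- b = 0
    simp only [pow_zero, one_mul, Nat.sub_zero, pow_one] at heq
    -- heq : h ^ s₀.val = g * h ^ s₁.val
    rw [← hx, ← hvalmul, ← hvalmul] at heq
    have heq2 : g ^ (x * s₀).val = g ^ ((1 : ZMod p) + x * s₁).val := by
      rw [hval, hone, pow_one]; exact heq
    have hexp : x * s₀ = 1 + x * s₁ := hginj _ _ heq2
    have hne : s₀ ≠ s₁ := by
      rintro rfl
      have : (0 : ZMod p) = 1 := by linear_combination hexp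
      exact one_ne_zero this.symm
    have hd : s₀ - s₁ ≠ 0 := sub_ne_zero.mpr hne
    have hxval : x = (s₀ - s₁)⁻¹ := by
      have h2 : (s₀ - s₁) * x = 1 := by linear_combination hexp
      exact eq_inv_of_mul_eq_one_left (by linear_combination h2)
    refine ⟨hne, ?_⟩
    have : (2 * ((0 : ℕ) : ZMod p) - 1) * (s₁ - s₀)⁻¹ = x := by
      rw [hxval, show s₁ - s₀ = -(s₀ - s₁) by ring, inv_neg]
      push_cast
      ring
    rw [this]; exact hx.symm
  · -- b = 1
    simp only [pow_one, Nat.sub_self, pow_zero, one_mul] at heq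
    -- heq : g * h ^ s₀.val = h ^ s₁.val
    rw [← hx, ← hvalmul, ← hvalmul] at heq
    have heq2 : g ^ ((1 : ZMod p) + x * s₀).val = g ^ (x * s₁).val := by
      rw [hval, hone, pow_one]; exact heq
    have hexp : 1 + x * s₀ = x * s₁ := hginj _ _ heq2
    have hne : s₀ ≠ s₁ := by
      rintro rfl
      have : (0 : ZMod p) = 1 := by linear_combination -hexp
      exact one_ne_zero this.symm
    have hd : s₁ - s₀ ≠ 0 := sub_ne_zero.mpr (Ne.symm hne)
    have hxval : x = (s₁ - s₀)⁻¹ := by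
      have h2 : x * (s₁ - s₀) = 1 := by linear_combination -hexp
      exact eq_inv_of_mul_eq_one_left h2
    refine ⟨hne, ?_⟩
    have : (2 * ((1 : ℕ) : ZMod p) - 1) * (s₁ - s₀)⁻¹ = x := by
      rw [hxval]; push_cast; ring
    rw [this]; exact hx.symm
end
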